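/- arXiv:2006.15703 — 3 statements merged into one kernel-verified Lean document; each statement's English description precedes it below -/
import Mathlib

section
/- If C is a φ-shiftable chain for a proper partial (Δ+1)-edge-coloring φ, then the reverse chain C* is Shift(φ,C)-shiftable and Shift(Shift(φ,C),C*) = φ. -/
open SimpleGraph

variable {V : Type*} [DecidableEq V]

/-- Two edges (as unordered pairs of vertices) are adjacent: distinct and sharing an endpoint. -/
def EdgeAdj (e f : Sym2 V) : Prop := e ≠ f ∧ ∃ v, v ∈ e ∧ v ∈ f

/-- A proper partial edge-coloring of `G` with colors `{1,…,Δ+1}` (as `Fin (Δ+1)`):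
its domain consists of edges of `G`, and adjacent colored edges get distinct colors. -/
def IsProperPartial (G : SimpleGraph V) (Δ : ℕ)
    (φ : Sym2 V → Option (Fin (Δ + 1))) : Prop :=
  (∀ e, (φ e).isSome → e ∈ G.edgeSet) ∧
  ∀ e f, EdgeAdj e f → (φ e).isSome → φ e ≠ φ f

/-- The set `M(φ,x)` of colors missing at `x`. -/
def missingColors (G : SimpleGraph V) (Δ : ℕ)
    (φ : Sym2 V → Option (Fin (Δ + 1))) (x : V) : Set (Fin (Δ + 1)) :=
  {c | ∀ y, G.Adj x y → φ s(x, y) ≠ some c}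

/-- `Shift φ e₀ e₁`: move the color of `e₁` to `e₀`, uncolor `e₁`, keep all else. -/
def Shift {α : Type*} (φ : Sym2 V → Option α) (e₀ e₁ : Sym2 V) :
    Sym2 V → Option α :=
  fun e => if e = e₀ then φ e₁ else if e = e₁ then none else φ e

/-- `(e₀, e₁)` is a `φ`-shiftable pair. -/
def ShiftablePair (G : SimpleGraph V) (Δ : ℕ) (φ : Sym2 V → Option (Fin (Δ + 1)))
    (e₀ e₁ : Sym2 V) : Prop :=
  EdgeAdj e₀ e₁ ∧ e₀ ∈ G.edgeSet ∧ φ e₀ = none ∧ (φ e₁).isSome ∧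
    IsProperPartial G Δ (Shift φ e₀ e₁)

/-- Shifting a coloring along a chain (list of edges). -/
def ShiftChain {α : Type*} : List (Sym2 V) → (Sym2 V → Option α) → (Sym2 V → Option α)
  | [], φ => φ
  | [_], φ => φ
  | e₀ :: e₁ :: rest, φ => ShiftChain (e₁ :: rest) (Shift φ e₀ e₁)

/-- A chain is `φ`-shiftable: each consecutive pair is shiftable w.r.t. the current coloring
(for a single-edge chain we require the edge to be an uncolored edge of `G`). -/
def ChainShiftable (G : SimpleGraph V) (Δ : ℕ) :
    List (Sym2 V) → (Sym2 V → Option (Fin (Δ + 1))) → Prop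
  | [], _ => True
  | [e], φ => φ e = none ∧ e ∈ G.edgeSet
  | e₀ :: e₁ :: rest, φ =>
      ShiftablePair G Δ φ e₀ e₁ ∧ ChainShiftable G Δ (e₁ :: rest) (Shift φ e₀ e₁)

/-- The spanning subgraph `G(φ, αβ)` of edges colored `α` or `β`. -/
def abSub (G : SimpleGraph V) (Δ : ℕ) (φ : Sym2 V → Option (Fin (Δ + 1)))
    (α β : Fin (Δ + 1)) : SimpleGraph V where
  Adj x y := G.Adj x y ∧ (φ s(x, y) = some α ∨ φ s(x, y) = some β)
  symm := by
    constructor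
    intro x y h
    refine ⟨h.1.symm, ?_⟩
    rw [Sym2.eq_swap]
    exact h.2
  loopless := ⟨fun x h => G.loopless.irrefl x h.1⟩

/-- A chain is `φ`-happy: it is `φ`-shiftable and its last edge is happy after shifting. -/
def ChainHappy (G : SimpleGraph V) (Δ : ℕ) (C : List (Sym2 V))
    (φ : Sym2 V → Option (Fin (Δ + 1))) : Prop :=
  ChainShiftable G Δ C φ ∧
    ∃ x y : V, C.getLast? = some s(x, y) ∧
      (missingColors G Δ (ShiftChain C φ) x ∩ missingColors G Δ (ShiftChain C φ) y).Nonempty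

omit [DecidableEq V] in
lemma edgeAdj_symm {e f : Sym2 V} (h : EdgeAdj e f) : EdgeAdj f e :=
  ⟨h.1.symm, h.2.imp fun _ hv => ⟨hv.2, hv.1⟩⟩

lemma shift_shift_back {α : Type*} (φ : Sym2 V → Option α) (e₀ e₁ : Sym2 V)
    (hne : e₀ ≠ e₁) (h0 : φ e₀ = none) :
    Shift (Shift φ e₀ e₁) e₁ e₀ = φ := by
  funext e
  simp only [Shift]
  by_cases h1 : e = e₁
  · subst h1; simp
  · by_cases h2 : e = e₀
    · subst h2; simp [hne, h0]
    · simp [h1, h2]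

lemma shiftChain_append_singleton {α : Type*} :
    ∀ (L : List (Sym2 V)) (ψ : Sym2 V → Option α) (e ℓ : Sym2 V),
      L.getLast? = some ℓ →
      ShiftChain (L ++ [e]) ψ = Shift (ShiftChain L ψ) ℓ e
  | [], _, _, _, h => by simp at h
  | [a], ψ, e, ℓ, h => by
      simp at h; subst h; rfl
  | a :: b :: rest, ψ, e, ℓ, h => by
      have h' : (b :: rest).getLast? = some ℓ := by
        rw [List.getLast?_cons_cons] at h; exact h
      show ShiftChain ((b :: rest) ++ [e]) (Shift ψ a b) = _
      exact shiftChain_append_singleton (b :: rest) (Shift ψ a b) e ℓ h'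

lemma chainShiftable_append_singleton (G : SimpleGraph V) (Δ : ℕ) :
    ∀ (L : List (Sym2 V)) (ψ : Sym2 V → Option (Fin (Δ + 1))) (e ℓ : Sym2 V),
      L.getLast? = some ℓ →
      ChainShiftable G Δ L ψ →
      ShiftablePair G Δ (ShiftChain L ψ) ℓ e →
      e ∈ G.edgeSet →
      ChainShiftable G Δ (L ++ [e]) ψ
  | [], _, _, _, h, _, _, _ => by simp at h
  | [a], ψ, e, ℓ, h, _, hp, he => by
      simp at h; subst h
      refine ⟨hp, ?_, he⟩
      have hne : a ≠ e := hp.1.1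
      simp [Shift, Ne.symm hne]
  | a :: b :: rest, ψ, e, ℓ, h, hL, hp, he => by
      have h' : (b :: rest).getLast? = some ℓ := by
        rw [List.getLast?_cons_cons] at h; exact h
      exact ⟨hL.1,
        chainShiftable_append_singleton G Δ (b :: rest) (Shift ψ a b) e ℓ h' hL.2 hp he⟩

/-- if `C` is a `φ`-shiftable chain then its reverse `C*` is
`Shift(φ,C)`-shiftable, and shifting along `C*` recovers `φ`. -/
theorem shiftChain_reversible [Fintype V] (G : SimpleGraph V) (Δ : ℕ)
    (φ : Sym2 V → Option (Fin (Δ + 1))) (hφ : IsProperPartial G Δ φ)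
    (C : List (Sym2 V)) (hchain : C.Chain' EdgeAdj) (hC : ChainShiftable G Δ C φ) :
    ChainShiftable G Δ C.reverse (ShiftChain C φ) ∧
      ShiftChain C.reverse (ShiftChain C φ) = φ := by
  induction C generalizing φ with
  | nil => exact ⟨trivial, rfl⟩
  | cons e₀ rest ih =>
    cases rest with
    | nil => exact ⟨hC, rfl⟩
    | cons e₁ rest' =>
      obtain ⟨hpair, hC'⟩ := hC
      have hφ' : IsProperPartial G Δ (Shift φ e₀ e₁) := hpair.2.2.2.2
      have hchain' : (e₁ :: rest').Chain' EdgeAdj := hchain.tail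
      obtain ⟨h1, h2⟩ := ih (Shift φ e₀ e₁) hφ' hchain' hC'
      have hne : e₀ ≠ e₁ := hpair.1.1
      have hback : Shift (Shift φ e₀ e₁) e₁ e₀ = φ :=
        shift_shift_back φ e₀ e₁ hne hpair.2.2.1
      have hlast : ((e₁ :: rest').reverse).getLast? = some e₁ := by
        rw [List.getLast?_reverse]; rfl
      have hsp : ShiftablePair G Δ
          (ShiftChain (e₁ :: rest').reverse (ShiftChain (e₁ :: rest') (Shift φ e₀ e₁)))
          e₁ e₀ := by
        rw [h2]
        refine ⟨edgeAdj_symm hpair.1, hφ.1 e₁ hpair.2.2.2.1, ?_, ?_, ?_⟩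
        · simp [Shift, Ne.symm hne]
        · simpa [Shift] using hpair.2.2.2.1
        · rw [hback]; exact hφ
      have hrev : (e₀ :: e₁ :: rest').reverse = (e₁ :: rest').reverse ++ [e₀] :=
        List.reverse_cons
      have hsc : ShiftChain (e₀ :: e₁ :: rest') φ
          = ShiftChain (e₁ :: rest') (Shift φ e₀ e₁) := rfl
      constructor
      · rw [hrev, hsc]
        exact chainShiftable_append_singleton G Δ _ _ e₀ e₁ hlast h1 hsp hpair.2.1
      · rw [hrev, hsc, shiftChain_append_singleton _ _ _ _ hlast, h2, hback]
end

section
/- If C is a φ-happy chain (i.e., C is φ-shiftable and the last edge of C is Shift(φ,C)-happy), then the connected subgraph H(C) of G with vertex set V(C) and edge set E(C) is augmenting for φ: there exists a proper partial coloring ψ with domain dom(φ) ∪ E(C) that agrees with φ outside E(C). -/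
open SimpleGraph

variable {V : Type*} [DecidableEq V]

lemma shiftChain_not_mem {α : Type*} :
    ∀ (C : List (Sym2 V)) (φ : Sym2 V → Option α) (f : Sym2 V), f ∉ C →
      ShiftChain C φ f = φ f
  | [], _, _, _ => rfl
  | [_], _, _, _ => rfl
  | e₀ :: e₁ :: rest, φ, f, hf => by
      have h0 : f ≠ e₀ := by simp at hf; tauto
      have h1 : f ∉ e₁ :: rest := by simp at hf ⊢; tauto
      show ShiftChain (e₁ :: rest) (Shift φ e₀ e₁) f = φ f
      rw [shiftChain_not_mem (e₁ :: rest) _ f h1]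
      simp only [Shift, if_neg h0, if_neg (by simp at h1 ⊢; tauto : f ≠ e₁)]

lemma shiftChain_proper (G : SimpleGraph V) (Δ : ℕ) :
    ∀ (C : List (Sym2 V)) (φ : Sym2 V → Option (Fin (Δ + 1))),
      IsProperPartial G Δ φ → ChainShiftable G Δ C φ →
      IsProperPartial G Δ (ShiftChain C φ)
  | [], _, h, _ => h
  | [_], _, h, _ => h
  | e₀ :: e₁ :: rest, φ, _, hs =>
      shiftChain_proper G Δ (e₁ :: rest) _ hs.1.2.2.2.2 hs.2

lemma last_mem_edgeSet (G : SimpleGraph V) (Δ : ℕ) :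
    ∀ (C : List (Sym2 V)) (φ : Sym2 V → Option (Fin (Δ + 1))) (L : Sym2 V),
      ChainShiftable G Δ C φ → C.getLast? = some L → L ∈ G.edgeSet
  | [], _, _, _, h => by simp at h
  | [e], _, L, hs, h => by simp at h; subst h; exact hs.2
  | e₀ :: e₁ :: rest, φ, L, hs, h =>
      last_mem_edgeSet G Δ (e₁ :: rest) _ L hs.2 (by simpa using h)

lemma shiftChain_domain (G : SimpleGraph V) (Δ : ℕ) :
    ∀ (C : List (Sym2 V)) (φ : Sym2 V → Option (Fin (Δ + 1))) (L : Sym2 V),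
      ChainShiftable G Δ C φ → C.getLast? = some L →
      ShiftChain C φ L = none ∧
        ∀ f, f ≠ L → ((ShiftChain C φ f).isSome ↔ (φ f).isSome ∨ f ∈ C)
  | [], _, _, _, h => by simp at h
  | [e], φ, L, hs, h => by
      simp at h; subst h
      refine ⟨hs.1, fun f hf => ?_⟩
      show (φ f).isSome ↔ _
      simp [hf]
  | e₀ :: e₁ :: rest, φ, L, hs, h => by
      have h' : (e₁ :: rest).getLast? = some L := by simpa using h
      obtain ⟨ih1, ih2⟩ := shiftChain_domain G Δ (e₁ :: rest) (Shift φ e₀ e₁) L hs.2 h'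
      refine ⟨ih1, fun f hf => ?_⟩
      rw [show ShiftChain (e₀ :: e₁ :: rest) φ = ShiftChain (e₁ :: rest) (Shift φ e₀ e₁) from rfl]
      rw [ih2 f hf]
      obtain ⟨⟨hne, -⟩, -, h00, h11, -⟩ := hs.1
      by_cases h0 : f = e₀
      · subst h0
        simp [Shift, h11, List.mem_cons]
      · by_cases h1 : f = e₁
        · subst h1
          simp [Shift, hne.symm, List.mem_cons]
        · simp [Shift, h0, h1, List.mem_cons]

theorem happy_chain_augmenting' [Fintype V] (G : SimpleGraph V) (Δ : ℕ)
    (φ : Sym2 V → Option (Fin (Δ + 1))) (hφ : IsProperPartial G Δ φ)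
    (C : List (Sym2 V)) (hchain : C.Chain' EdgeAdj)
    (hhappy : ChainShiftable G Δ C φ ∧
    ∃ x y : V, C.getLast? = some s(x, y) ∧
      (missingColors G Δ (ShiftChain C φ) x ∩ missingColors G Δ (ShiftChain C φ) y).Nonempty) :
    ∃ ψ : Sym2 V → Option (Fin (Δ + 1)), IsProperPartial G Δ ψ ∧
      (∀ f, (ψ f).isSome ↔ ((φ f).isSome ∨ f ∈ C)) ∧
      ∀ f ∉ C, ψ f = φ f := by
  obtain ⟨hs, x, y, hL, c, hcx, hcy⟩ := hhappy
  set L : Sym2 V := s(x, y) with hLdef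
  set φ' := ShiftChain C φ with hφ'
  have hproper : IsProperPartial G Δ φ' := shiftChain_proper G Δ C φ hφ hs
  have hLedge : L ∈ G.edgeSet := last_mem_edgeSet G Δ C φ L hs hL
  have hLmem : L ∈ C := by
    obtain ⟨hne, heq⟩ := List.mem_getLast?_eq_getLast (x := L) hL
    rw [heq]
    exact List.getLast_mem hne
  obtain ⟨hnone, hdom⟩ := shiftChain_domain G Δ C φ L hs hL
  refine ⟨fun f => if f = L then some c else φ' f, ⟨?_, ?_⟩, ?_, ?_⟩
  · intro e he
    by_cases h : e = L
    · subst h; exact hLedge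
    · exact hproper.1 e (by simpa [h] using he)
  · -- key properness
    have key : ∀ f, EdgeAdj L f → φ' f ≠ some c := by
      intro f ⟨hne, v, hvL, hvf⟩ hc
      have hfE : f ∈ G.edgeSet := hproper.1 f (by simp [hc])
      obtain ⟨w, rfl⟩ := Sym2.mem_iff_exists.mp hvf
      have hadj : G.Adj v w := hfE
      rcases Sym2.mem_iff.mp hvL with rfl | rfl
      · exact hcx w hadj hc
      · exact hcy w hadj hc
    intro e f hef he
    beta_reduce at he ⊢
    by_cases h : e = L
    · subst h
      simp only [if_pos rfl]
      have hfne : f ≠ L := fun hh => hef.1 (hh ▸ rfl)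
      rw [if_neg hfne]
      exact fun hh => key f hef hh.symm
    · rw [if_neg h] at he ⊢
      by_cases h2 : f = L
      · subst h2
        rw [if_pos rfl]
        have : EdgeAdj L e := ⟨fun hh => hef.1 hh.symm, by
          obtain ⟨-, v, hv1, hv2⟩ := hef; exact ⟨v, hv2, hv1⟩⟩
        intro hh
        exact key e this hh
      · rw [if_neg h2]
        exact hproper.2 e f hef he
  · intro f
    beta_reduce
    by_cases h : f = L
    · subst h; simp [hLmem]
    · rw [if_neg h]
      exact hdom f h
  · intro f hf
    have h : f ≠ L := fun hh => hf (hh ▸ hLmem)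
    beta_reduce
    rw [if_neg h]
    exact shiftChain_not_mem C φ f hf

/-- a `φ`-happy chain gives an augmenting subgraph: there is a proper
partial coloring `ψ` with domain `dom(φ) ∪ E(C)` agreeing with `φ` outside `E(C)`. -/
theorem happy_chain_augmenting [Fintype V] (G : SimpleGraph V) (Δ : ℕ)
    (φ : Sym2 V → Option (Fin (Δ + 1))) (hφ : IsProperPartial G Δ φ)
    (C : List (Sym2 V)) (hchain : C.Chain' EdgeAdj) (hhappy : ChainHappy G Δ C φ) :
    ∃ ψ : Sym2 V → Option (Fin (Δ + 1)), IsProperPartial G Δ ψ ∧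
      (∀ f, (ψ f).isSome ↔ ((φ f).isSome ∨ f ∈ C)) ∧
      ∀ f ∉ C, ψ f = φ f := by
  exact happy_chain_augmenting' G Δ φ hφ C hchain hhappy
end

section
/- Let φ be a proper partial (Δ+1)-edge-coloring and let xy be a (φ,αβ)-successful uncolored edge: xy is not φ-happy, both x and y have degree < 2 in the αβ-colored subgraph, and x and y lie in different components of the αβ-colored subgraph. Then the chain P(x,y,φ,αβ) = (xy, e₁,...,e_k), where (e₁,...,e_k) is the αβ-alternating path starting at y, is φ-happy: it is φ-shiftable and its last edge is Shift(φ,P)-happy. -/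
open SimpleGraph

variable {V : Type*} [DecidableEq V]

/-- The other color of the pair `{α, β}`. -/
def oppc {n : ℕ} (α β γ : Fin n) : Fin n := if γ = α then β else α

lemma oppc_mem {n : ℕ} (α β γ : Fin n) : oppc α β γ = α ∨ oppc α β γ = β := by
  unfold oppc; split <;> simp

lemma oppc_ne {n : ℕ} {α β γ : Fin n} (hab : α ≠ β) (h : γ = α ∨ γ = β) :
    oppc α β γ ≠ γ := by
  unfold oppc; rcases h with rfl | rfl
  · simpa using hab.symm
  · simp [hab.symm, hab]

lemma oppc_oppc {n : ℕ} {α β γ : Fin n} (hab : α ≠ β) (h : γ = α ∨ γ = β) :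
    oppc α β (oppc α β γ) = γ := by
  unfold oppc; rcases h with rfl | rfl
  · simp [hab.symm]
  · simp [hab.symm, hab]

/-- In a proper partial coloring, two edges through a common vertex with the same
(defined) color coincide. -/
lemma proper_unique {G : SimpleGraph V} {Δ : ℕ} {ψ : Sym2 V → Option (Fin (Δ + 1))}
    (hψ : IsProperPartial G Δ ψ) {e f : Sym2 V} {v : V} (hv : v ∈ e) (hv' : v ∈ f)
    {c : Fin (Δ + 1)} (he : ψ e = some c) (hf : ψ f = some c) : e = f := by
  by_contra h
  exact hψ.2 e f ⟨h, v, hv, hv'⟩ (by rw [he]; rfl) (he.trans hf.symm)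

lemma chainHappy_cons {G : SimpleGraph V} {Δ : ℕ} {ψ : Sym2 V → Option (Fin (Δ + 1))}
    {e₀ e₁ : Sym2 V} {l : List (Sym2 V)}
    (hS : ShiftablePair G Δ ψ e₀ e₁)
    (hH : ChainHappy G Δ (e₁ :: l) (Shift ψ e₀ e₁)) :
    ChainHappy G Δ (e₀ :: e₁ :: l) ψ := by
  obtain ⟨hsh, a, b, hlast, hne⟩ := hH
  exact ⟨⟨hS, hsh⟩, a, b, by rw [List.getLast?_cons_cons]; exact hlast, hne⟩

/-- Main induction: shifting along a maximal alternating path yields a happy chain. -/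
lemma aux_chain (G : SimpleGraph V) (Δ : ℕ) (α β : Fin (Δ + 1)) (hab : α ≠ β) :
    ∀ {u z : V} (W : G.Walk u z) (ψ : Sym2 V → Option (Fin (Δ + 1))) (p : V)
      (γ : Fin (Δ + 1)),
      W.IsPath → IsProperPartial G Δ ψ → G.Adj p u → ψ s(p, u) = none →
      p ∉ W.support → (γ = α ∨ γ = β) →
      (∀ w, G.Adj u w → ψ s(u, w) ≠ some γ) →
      (∀ w, G.Adj p w → ψ s(p, w) ≠ some (oppc α β γ)) →
      (∀ e ∈ W.edges, ψ e = some α ∨ ψ e = some β) →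
      (∀ v ∈ W.support, ∀ w, G.Adj v w →
        (ψ s(v, w) = some α ∨ ψ s(v, w) = some β) → s(v, w) ∈ s(p, u) :: W.edges) →
      ChainHappy G Δ (s(p, u) :: W.edges) ψ := by
  intro u z W
  induction W with
  | nil =>
    rename_i u'
    intro ψ p γ hWp hψ hpu hnone hps hγab hγu hγ'p hcol hmax
    simp only [Walk.edges_nil, Walk.support_nil, List.mem_singleton] at hmax ⊢
    refine ⟨⟨hnone, G.mem_edgeSet.mpr hpu⟩, p, u', by simp, ⟨oppc α β γ, ?_, ?_⟩⟩
    · exact fun w hw => hγ'p w hw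
    · -- oppc γ is missing at u'
      intro w hw hc
      have hc' : ψ s(u', w) = some (oppc α β γ) := hc
      have hor : ψ s(u', w) = some α ∨ ψ s(u', w) = some β := by
        rcases oppc_mem α β γ with hh | hh <;> rw [hh] at hc'
        · exact Or.inl hc'
        · exact Or.inr hc'
      have hmem := hmax u' rfl w hw hor
      rw [hmem, hnone] at hc'
      exact absurd hc' (by simp)
  | @cons u v z h W' ih =>
    intro ψ p γ hWp hψ hpu hnone hps hγab hγu hγ'p hcol hmax
    rw [Walk.support_cons, List.mem_cons, not_or] at hps
    obtain ⟨hpu', hps'⟩ := hps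
    have hWp' : W'.IsPath := ((Walk.cons_isPath_iff h W').mp hWp).1
    have huW' : u ∉ W'.support := ((Walk.cons_isPath_iff h W').mp hWp).2
    have hpv : p ≠ v := by rintro rfl; exact hps' W'.start_mem_support
    have hne_e : s(u, v) ≠ s(p, u) := by
      intro hh
      rcases Sym2.eq_iff.mp hh with ⟨h1, h2⟩ | ⟨h1, h2⟩
      · exact hpu.ne h1.symm
      · exact hpv h2.symm
    -- the color of the first walk edge is `oppc α β γ`
    have hc₁ : ψ s(u, v) = some (oppc α β γ) := by
      have hcv := hcol s(u, v) (by simp)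
      rcases hγab with rfl | rfl
      · simpa [oppc] using hcv.resolve_left (hγu v h)
      · have := hcv.resolve_right (hγu v h)
        simpa [oppc, hab.symm] using this
    set ψ' := Shift ψ s(p, u) s(u, v) with hψ'def
    have hval0 : ψ' s(p, u) = some (oppc α β γ) := by
      show Shift ψ s(p, u) s(u, v) s(p, u) = _
      unfold Shift
      rw [if_pos rfl]
      exact hc₁
    have hval1 : ψ' s(u, v) = none := by
      show Shift ψ s(p, u) s(u, v) s(u, v) = _
      unfold Shift
      rw [if_neg hne_e, if_pos rfl]
    have hvalo : ∀ e, e ≠ s(p, u) → e ≠ s(u, v) → ψ' e = ψ e := by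
      intro e h1 h2
      show Shift ψ s(p, u) s(u, v) e = _
      unfold Shift
      rw [if_neg h1, if_neg h2]
    -- no edge through p or u (other than the two shifted ones) has color oppc γ
    have key : ∀ f : Sym2 V, f ≠ s(p, u) → f ≠ s(u, v) → (p ∈ f ∨ u ∈ f) →
        ψ f ≠ some (oppc α β γ) := by
      intro f hf1 hf2 hf3 hc
      rcases hf3 with hin | hin
      · obtain ⟨w, rfl⟩ := Sym2.mem_iff_exists.mp hin
        have hadj : G.Adj p w := G.mem_edgeSet.mp (hψ.1 _ (by rw [hc]; rfl))
        exact hγ'p w hadj hc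
      · exact hf2 (proper_unique hψ hin (Sym2.mem_mk_left u v) hc hc₁)
    have hψ' : IsProperPartial G Δ ψ' := by
      constructor
      · intro e he
        by_cases h1 : e = s(p, u)
        · exact h1 ▸ G.mem_edgeSet.mpr hpu
        · by_cases h2 : e = s(u, v)
          · rw [h2, hval1] at he; exact absurd he (by simp)
          · rw [hvalo e h1 h2] at he; exact hψ.1 e he
      · rintro e f ⟨hef, v₀, hv₀e, hv₀f⟩ hsome heq
        by_cases he0 : e = s(p, u)
        · subst he0
          rw [hval0] at heq
          by_cases hf1 : f = s(u, v)
          · rw [hf1, hval1] at heq; exact absurd heq (by simp)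
          · have hmem : p ∈ f ∨ u ∈ f := by
              rcases Sym2.mem_iff.mp hv₀e with rfl | rfl
              · exact Or.inl hv₀f
              · exact Or.inr hv₀f
            exact key f (Ne.symm hef) hf1 hmem
              (by rw [hvalo f (Ne.symm hef) hf1] at heq; exact heq.symm)
        · by_cases he1 : e = s(u, v)
          · rw [he1, hval1] at hsome; exact absurd hsome (by simp)
          · rw [hvalo e he0 he1] at hsome heq
            by_cases hf0 : f = s(p, u)
            · rw [hf0, hval0] at heq
              have hmem : p ∈ e ∨ u ∈ e := by
                rw [hf0] at hv₀f
                rcases Sym2.mem_iff.mp hv₀f with rfl | rfl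
                · exact Or.inl hv₀e
                · exact Or.inr hv₀e
              exact key e he0 he1 hmem heq
            · by_cases hf1 : f = s(u, v)
              · rw [hf1, hval1] at heq
                rw [heq] at hsome; exact absurd hsome (by simp)
              · rw [hvalo f hf0 hf1] at heq
                exact hψ.2 e f ⟨hef, v₀, hv₀e, hv₀f⟩ hsome heq
    have hSP : ShiftablePair G Δ ψ s(p, u) s(u, v) :=
      ⟨⟨Ne.symm hne_e, u, Sym2.mem_mk_right p u, Sym2.mem_mk_left u v⟩,
        G.mem_edgeSet.mpr hpu, hnone, by rw [hc₁]; rfl, hψ'⟩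
    rw [Walk.edges_cons]
    refine chainHappy_cons hSP ?_
    refine ih ψ' u (oppc α β γ) hWp' hψ' h hval1 huW' (oppc_mem α β γ) ?_ ?_ ?_ ?_
    · -- oppc γ missing at v w.r.t. ψ'
      intro w hw hc
      have h1 : s(v, w) ≠ s(p, u) := by
        intro hh
        rcases Sym2.eq_iff.mp hh with ⟨h1, h2⟩ | ⟨h1, h2⟩
        · exact hpv h1.symm
        · exact h.ne h1.symm
      by_cases h2 : s(v, w) = s(u, v)
      · rw [h2, hval1] at hc; exact absurd hc (by simp)
      · rw [hvalo _ h1 h2] at hc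
        exact h2 (proper_unique hψ (Sym2.mem_mk_left v w)
          (Sym2.mem_mk_right u v) hc hc₁)
    · -- γ missing at u w.r.t. ψ'
      intro w hw
      rw [oppc_oppc hab hγab]
      by_cases h1 : s(u, w) = s(p, u)
      · rw [h1, hval0]
        intro hc
        exact oppc_ne hab hγab (Option.some_injective _ hc)
      · by_cases h2 : s(u, w) = s(u, v)
        · rw [h2, hval1]; simp
        · rw [hvalo _ h1 h2]; exact hγu w hw
    · -- colors of remaining edges unchanged
      intro e he
      have h1 : e ≠ s(p, u) := by
        rintro rfl
        exact hps' (Walk.fst_mem_support_of_mem_edges W' he)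
      have h2 : e ≠ s(u, v) := by
        rintro rfl
        have := hWp.isTrail.edges_nodup
        rw [Walk.edges_cons] at this
        exact (List.nodup_cons.mp this).1 he
      rw [hvalo e h1 h2]
      exact hcol e (by rw [Walk.edges_cons]; exact List.mem_cons_of_mem _ he)
    · -- maximality for the rest
      intro v₀ hv₀ w hw hc
      by_cases h2 : s(v₀, w) = s(u, v)
      · rw [h2]; exact List.mem_cons_self
      · have h1 : s(v₀, w) ≠ s(p, u) := by
          intro hh
          have : v₀ ∈ s(p, u) := hh ▸ Sym2.mem_mk_left v₀ w
          rcases Sym2.mem_iff.mp this with rfl | rfl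
          · exact hps' hv₀
          · exact huW' hv₀
        rw [hvalo _ h1 h2] at hc
        have := hmax v₀ (by rw [Walk.support_cons]; exact List.mem_cons_of_mem _ hv₀)
          w hw hc
        rw [Walk.edges_cons, List.mem_cons] at this
        rcases this with hh | hh
        · exact absurd hh h1
        · exact hh

/-- for a `(φ,αβ)`-successful uncolored edge `xy` (hopeful and with `x`, `y`
in different components of the `αβ`-subgraph), the chain `P(x,y,φ,αβ)` is `φ`-happy. -/
theorem alternating_chain_happy [Fintype V] (G : SimpleGraph V) (Δ : ℕ)
    (φ : Sym2 V → Option (Fin (Δ + 1))) (hφ : IsProperPartial G Δ φ)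
    (α β : Fin (Δ + 1)) (hab : α ≠ β) (x y z : V) (hadj : G.Adj x y)
    (hunc : φ s(x, y) = none)
    (hnothappy : missingColors G Δ φ x ∩ missingColors G Δ φ y = ∅)
    (hx : ((abSub G Δ φ α β).neighborSet x).ncard < 2)
    (hy : ((abSub G Δ φ α β).neighborSet y).ncard < 2)
    (hsucc : ¬ (abSub G Δ φ α β).Reachable x y)
    (W : (abSub G Δ φ α β).Walk y z) (hWp : W.IsPath)
    (hWmax : ∀ w, (abSub G Δ φ α β).Adj z w → s(z, w) ∈ W.edges) :
    ChainHappy G Δ (s(x, y) :: W.edges) φ := by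
  have hle : ∀ e ∈ W.edges, e ∈ G.edgeSet := by
    intro e he
    have := W.edges_subset_edgeSet he
    revert this
    refine Sym2.ind (fun a b hab' => ?_) e
    exact G.mem_edgeSet.mpr ((abSub G Δ φ α β).mem_edgeSet.mp hab').1
  have hcolW : ∀ e ∈ W.edges, φ e = some α ∨ φ e = some β := by
    intro e he
    have := W.edges_subset_edgeSet he
    revert this
    refine Sym2.ind (fun a b hab' => ?_) e
    exact ((abSub G Δ φ α β).mem_edgeSet.mp hab').2
  -- pick the color γ missing at y (with oppc γ missing at x)
  have hmiss : ∀ (v : V), (((abSub G Δ φ α β).neighborSet v).ncard < 2) →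
      (∀ w, G.Adj v w → φ s(v, w) ≠ some α) ∨ (∀ w, G.Adj v w → φ s(v, w) ≠ some β) := by
    intro v hv
    by_contra hcon
    push_neg at hcon
    obtain ⟨⟨w₁, hw₁, hc₁⟩, ⟨w₂, hw₂, hc₂⟩⟩ := hcon
    have hne : w₁ ≠ w₂ := by
      rintro rfl
      rw [hc₁] at hc₂
      exact hab (Option.some_injective _ hc₂)
    have h1 : w₁ ∈ (abSub G Δ φ α β).neighborSet v := ⟨hw₁, Or.inl hc₁⟩
    have h2 : w₂ ∈ (abSub G Δ φ α β).neighborSet v := ⟨hw₂, Or.inr hc₂⟩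
    have : 1 < ((abSub G Δ φ α β).neighborSet v).ncard :=
      (Set.one_lt_ncard (Set.toFinite _)).mpr ⟨w₁, h1, w₂, h2, hne⟩
    omega
  have hdisj : ∀ c : Fin (Δ + 1), (∀ w, G.Adj x w → φ s(x, w) ≠ some c) →
      (∀ w, G.Adj y w → φ s(y, w) ≠ some c) → False := by
    intro c h1 h2
    exact Set.eq_empty_iff_forall_notMem.mp hnothappy c ⟨h1, h2⟩
  obtain ⟨γ, hγab, hγy, hγx⟩ : ∃ γ : Fin (Δ + 1), (γ = α ∨ γ = β) ∧
      (∀ w, G.Adj y w → φ s(y, w) ≠ some γ) ∧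
      (∀ w, G.Adj x w → φ s(x, w) ≠ some (oppc α β γ)) := by
    rcases hmiss x hx with hxa | hxb
    · have hyb : ∀ w, G.Adj y w → φ s(y, w) ≠ some β :=
        (hmiss y hy).resolve_left (fun hya => hdisj α hxa hya)
      exact ⟨β, Or.inr rfl, hyb, by simpa [oppc, hab.symm] using hxa⟩
    · have hya : ∀ w, G.Adj y w → φ s(y, w) ≠ some α :=
        (hmiss y hy).resolve_right (fun hyb => hdisj β hxb hyb)
      exact ⟨α, Or.inl rfl, hya, by simpa [oppc] using hxb⟩
  -- x is not on the walk
  have hxW : x ∉ W.support := by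
    intro hxs
    exact hsucc (Walk.reachable (W.takeUntil x hxs)).symm
  -- at most two αβ-neighbors through any vertex
  have htwo : ∀ (v a b w : V), (abSub G Δ φ α β).Adj v a → (abSub G Δ φ α β).Adj v b → a ≠ b → (abSub G Δ φ α β).Adj v w →
      w = a ∨ w = b := by
    intro v a b w ha hb hne hw
    have eqedge : ∀ (a' w' : V) (c : Fin (Δ + 1)), φ s(v, a') = some c →
        φ s(v, w') = some c → w' = a' := by
      intro a' w' c h1 h2
      by_contra hne'
      have hee : s(v, a') ≠ s(v, w') := fun hh =>
        hne' (Sym2.congr_right.mp hh).symm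
      exact hφ.2 s(v, a') s(v, w') ⟨hee, v, Sym2.mem_mk_left _ _, Sym2.mem_mk_left _ _⟩
        (by rw [h1]; rfl) (h1.trans h2.symm)
    rcases ha.2 with h1 | h1 <;> rcases hb.2 with h2 | h2 <;> rcases hw.2 with h3 | h3
    · exact absurd (eqedge a b _ h1 h2) (Ne.symm hne)
    · exact absurd (eqedge a b _ h1 h2) (Ne.symm hne)
    · exact Or.inl (eqedge a w _ h1 h3)
    · exact Or.inr (eqedge b w _ h2 h3)
    · exact Or.inr (eqedge b w _ h2 h3)
    · exact Or.inl (eqedge a w _ h1 h3)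
    · exact absurd (eqedge a b _ h1 h2) (Ne.symm hne)
    · exact absurd (eqedge a b _ h1 h2) (Ne.symm hne)
  -- maximality along the whole walk
  have hmax : ∀ v ∈ W.support, ∀ w, G.Adj v w →
      (φ s(v, w) = some α ∨ φ s(v, w) = some β) → s(v, w) ∈ s(x, y) :: W.edges := by
    intro v hv w hGw hcw
    have hHvw : (abSub G Δ φ α β).Adj v w := ⟨hGw, hcw⟩
    by_cases hvz : v = z
    · subst hvz
      exact List.mem_cons_of_mem _ (hWmax w hHvw)
    · -- decompose the walk at v
      obtain ⟨d₁, hd₁, D', hD⟩ :=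
        Walk.not_nil_iff.mp (Walk.not_nil_of_ne hvz (p := W.dropUntil v hv))
      have hd₁e : s(v, d₁) ∈ W.edges := by
        apply W.edges_dropUntil_subset hv
        rw [hD, Walk.edges_cons]
        exact List.mem_cons_self
      by_cases hvy : v = y
      · subst hvy
        have hw_eq : w = d₁ := by
          by_contra hne
          have : 1 < ((abSub G Δ φ α β).neighborSet v).ncard :=
            (Set.one_lt_ncard (Set.toFinite _)).mpr ⟨w, hHvw, d₁, hd₁, hne⟩
          omega
        rw [hw_eq]
        exact List.mem_cons_of_mem _ hd₁e
      · -- v is an interior vertex: get the incoming edge too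
        obtain ⟨t, ht, R, hR⟩ :=
          Walk.not_nil_iff.mp (Walk.not_nil_of_ne hvy
            (p := (W.takeUntil v hv).reverse))
        have hte : s(v, t) ∈ (W.takeUntil v hv).edges := by
          have : s(v, t) ∈ (W.takeUntil v hv).reverse.edges := by
            rw [hR, Walk.edges_cons]
            exact List.mem_cons_self
          rwa [Walk.edges_reverse, List.mem_reverse] at this
        have hteW : s(v, t) ∈ W.edges := W.edges_takeUntil_subset hv hte
        have htd : t ≠ d₁ := by
          rintro rfl
          have hnodup := hWp.isTrail.edges_nodup
          have hspec := W.take_spec hv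
          rw [← hspec, Walk.edges_append, List.nodup_append] at hnodup
          refine hnodup.2.2 _ hte _ ?_ rfl
          rw [hD, Walk.edges_cons]
          exact List.mem_cons_self
        rcases htwo v t d₁ w ht hd₁ htd hHvw with rfl | rfl
        · exact List.mem_cons_of_mem _ hteW
        · exact List.mem_cons_of_mem _ hd₁e
  -- transfer the walk to G and apply the main induction
  have hWg := (Walk.transfer W G hle)
  have hedges : (Walk.transfer W G hle).edges = W.edges := Walk.edges_transfer W hle
  have hsupp : (Walk.transfer W G hle).support = W.support := Walk.support_transfer W hle
  rw [← hedges]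
  exact aux_chain G Δ α β hab (Walk.transfer W G hle) φ x γ
    (hWp.transfer hle) hφ hadj hunc (by rw [hsupp]; exact hxW) hγab hγy hγx
    (by rw [hedges]; exact hcolW)
    (by rw [hedges, hsupp]; exact hmax)
end
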